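/- arXiv:2505.22422 — 2 statements merged into one kernel-verified Lean document; each statement's English description precedes it below -/
import Mathlib

section
/- Let X_1, ..., X_n be real-valued random variables forming a martingale difference sequence with X_i ≤ b almost surely for all i (i.e., E[X_i | X_1, ..., X_{i-1}] = 0), and let nV = Σ_{i=1}^n Var(X_i | X_1, ..., X_{i-1}). Then for any δ ∈ (0,1), with probability at least 1 - δ, simultaneously for all 1 ≤ t ≤ n: Σ_{i=1}^t X_i ≤ sqrt(2·n·V·log(1/δ)) + (b/3)·log(1/δ). -/
open MeasureTheory Finset

open scoped NNReal ENNReal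

/-! ### Analytic lemmas -/

lemma exp_le_quad_of_nonpos {u : ℝ} (hu : u ≤ 0) : Real.exp u ≤ 1 + u + u^2/2 := by
  have hd : ∀ x : ℝ, HasDerivAt (fun y : ℝ => Real.exp y - 1 - y - y^2/2)
      (Real.exp x - 1 - x) x := by
    intro x
    have h1 := (((Real.hasDerivAt_exp x).sub_const 1).sub (hasDerivAt_id x)).sub
      ((hasDerivAt_pow 2 x).div_const 2)
    refine h1.congr_deriv ?_
    simp
  have hmono : Monotone (fun y : ℝ => Real.exp y - 1 - y - y^2/2) := by
    apply monotone_of_deriv_nonneg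
    · exact fun x => (hd x).differentiableAt
    · intro x
      rw [(hd x).deriv]
      have := Real.add_one_le_exp x
      linarith
  have h0 := hmono hu
  simp at h0
  linarith

lemma one_sub_mul_exp_le (u : ℝ) : (1 - u) * Real.exp u ≤ 1 := by
  have h := Real.add_one_le_exp (-u)
  have hpos := Real.exp_pos u
  calc (1 - u) * Real.exp u ≤ Real.exp (-u) * Real.exp u := by nlinarith
    _ = 1 := by rw [← Real.exp_add]; simp

lemma key_phi_nonneg {u : ℝ} (hu : 0 ≤ u) :
    0 ≤ u^2/2 - (1 - u/3) * (Real.exp u - 1 - u) := by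
  set φ' : ℝ → ℝ := fun x => x + (1/3)*(Real.exp x - 1 - x) - (1 - x/3)*(Real.exp x - 1) with hφ'
  have hdφ : ∀ x : ℝ, HasDerivAt (fun y : ℝ => y^2/2 - (1 - y/3) * (Real.exp y - 1 - y)) (φ' x) x := by
    intro x
    have h1 : HasDerivAt (fun y : ℝ => y^2/2) x x := by
      simpa using (hasDerivAt_pow 2 x).div_const 2
    have h2 : HasDerivAt (fun y : ℝ => 1 - y/3) (-(1/3)) x := by
      simpa using ((hasDerivAt_id x).div_const 3).const_sub 1
    have h3 : HasDerivAt (fun y : ℝ => Real.exp y - 1 - y) (Real.exp x - 1) x :=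
      ((Real.hasDerivAt_exp x).sub_const 1).sub (hasDerivAt_id x)
    have := h1.sub (h2.mul h3)
    refine this.congr_deriv ?_
    rw [hφ']; ring
  have hdφ' : ∀ x : ℝ, HasDerivAt φ' ((1 + (x-1)*Real.exp x)/3) x := by
    intro x
    have h2 : HasDerivAt (fun y : ℝ => 1 - y/3) (-(1/3)) x := by
      simpa using ((hasDerivAt_id x).div_const 3).const_sub 1
    have h3 : HasDerivAt (fun y : ℝ => Real.exp y - 1 - y) (Real.exp x - 1) x :=
      ((Real.hasDerivAt_exp x).sub_const 1).sub (hasDerivAt_id x)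
    have h4 : HasDerivAt (fun y : ℝ => Real.exp y - 1) (Real.exp x) x :=
      (Real.hasDerivAt_exp x).sub_const 1
    have := ((hasDerivAt_id x).add (h3.const_mul (1/3))).sub ((h2.mul h4))
    refine this.congr_deriv ?_
    ring
  have hφ'mono : Monotone φ' := by
    apply monotone_of_deriv_nonneg
    · exact fun x => (hdφ' x).differentiableAt
    · intro x
      rw [(hdφ' x).deriv]
      have := one_sub_mul_exp_le x
      nlinarith
  have hφ'nonneg : ∀ x : ℝ, 0 ≤ x → 0 ≤ φ' x := by
    intro x hx
    have h0 : φ' 0 = 0 := by simp [hφ']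
    have := hφ'mono hx
    rw [h0] at this; exact this
  have hmono : MonotoneOn (fun y : ℝ => y^2/2 - (1 - y/3) * (Real.exp y - 1 - y)) (Set.Ici 0) := by
    apply monotoneOn_of_deriv_nonneg (convex_Ici 0)
    · exact (Continuous.continuousOn (by continuity))
    · intro x hx
      exact (hdφ x).differentiableAt.differentiableWithinAt
    · intro x hx
      rw [interior_Ici] at hx
      rw [(hdφ x).deriv]
      exact hφ'nonneg x hx.le
  have h := hmono (Set.self_mem_Ici) (Set.mem_Ici.2 hu) hu
  simp at h
  linarith

lemma exp_le_bennett' {u : ℝ} (hu : 0 ≤ u) (hu3 : u < 3) :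
    Real.exp u ≤ 1 + u + u^2 / (2 * (1 - u/3)) := by
  have h := key_phi_nonneg hu
  have hpos : 0 < 1 - u/3 := by linarith
  have key : (Real.exp u - 1 - u) * (2 * (1 - u/3)) ≤ u^2 := by nlinarith
  have h2 : Real.exp u - 1 - u ≤ u^2 / (2*(1-u/3)) := by
    rw [le_div_iff₀ (by positivity : (0:ℝ) < 2*(1-u/3))]; nlinarith
  linarith

lemma bernstein_pointwise {lam b : ℝ} (hlam : 0 < lam) (hb : 0 < b) (hlb : lam * b < 3)
    {x : ℝ} (hx : x ≤ b) :
    Real.exp (lam * x) ≤ 1 + lam * x + lam^2/(2*(1 - lam*b/3)) * x^2 := by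
  have hden : 0 < 1 - lam*b/3 := by nlinarith
  rcases le_or_gt x 0 with hx0 | hx0
  · have h := exp_le_quad_of_nonpos (mul_nonpos_of_nonneg_of_nonpos hlam.le hx0)
    have hle : (lam*x)^2/2 ≤ lam^2/(2*(1 - lam*b/3)) * x^2 := by
      have e1 : (lam*x)^2/2 = lam^2*x^2/2 := by ring
      have e2 : lam^2/(2*(1-lam*b/3)) * x^2 = lam^2*x^2/(2*(1-lam*b/3)) := by ring
      rw [e1, e2]
      gcongr
      nlinarith
    calc Real.exp (lam*x) ≤ 1 + lam*x + (lam*x)^2/2 := h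
      _ ≤ _ := by nlinarith
  · have hu : 0 ≤ lam * x := by positivity
    have hu3 : lam * x < 3 := lt_of_le_of_lt (by nlinarith) hlb
    have h := exp_le_bennett' hu hu3
    have hle : (lam*x)^2 / (2*(1 - lam*x/3)) ≤ lam^2/(2*(1 - lam*b/3)) * x^2 := by
      have hdx : 0 < 1 - lam*x/3 := by nlinarith
      have e1 : (lam*x)^2 = lam^2*x^2 := by ring
      have e2 : lam^2/(2*(1-lam*b/3)) * x^2 = lam^2*x^2/(2*(1-lam*b/3)) := by ring
      rw [e1, e2]
      gcongr
    calc Real.exp (lam*x) ≤ 1 + lam*x + (lam*x)^2/(2*(1 - lam*x/3)) := h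
      _ ≤ _ := by linarith

lemma exp_neg_mul_one_add_le {u : ℝ} (hu : 0 ≤ u) : Real.exp (-u) * (1 + u) ≤ 1 := by
  have h1 := Real.add_one_le_exp u
  have h2 := Real.exp_pos (-u)
  have h3 : Real.exp (-u) * Real.exp u = 1 := by rw [← Real.exp_add]; simp
  nlinarith

lemma freedman_algebra {b L nV r lam c : ℝ} (hb : 0 < b) (hL : 0 < L) (hnV : 0 < nV)
    (hr : r = Real.sqrt (nV / (2*L))) (hlam : lam = 1/(r + b/3))
    (hc : c = lam^2/(2*(1 - lam*b/3))) :
    c * nV + L = lam * (Real.sqrt (2*nV*L) + b/3*L) := by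
  have hrpos : 0 < r := by rw [hr]; exact Real.sqrt_pos.2 (by positivity)
  have hr2 : r^2 = nV / (2*L) := by rw [hr]; exact Real.sq_sqrt (by positivity)
  have hnVr : nV = 2*L*r^2 := by field_simp at hr2; linarith
  have hsqrt : Real.sqrt (2*nV*L) = 2*L*r := by
    rw [show 2*nV*L = (2*L*r)^2 by rw [hnVr]; ring, Real.sqrt_sq (by positivity)]
  have hden : (0:ℝ) < r + b/3 := by positivity
  have hlam_pos : 0 < lam := by rw [hlam]; positivity
  have h1 : 1 - lam*b/3 = r/(r + b/3) := by rw [hlam]; field_simp; ring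
  have h1pos : 0 < 1 - lam*b/3 := by rw [h1]; positivity
  rw [hsqrt, hc, h1, hlam, hnVr]
  field_simp
  ring

/-! ### Ville's inequality -/

lemma ville_sup {Ω : Type*} {m0 : MeasurableSpace Ω} {μ : Measure Ω} [IsFiniteMeasure μ]
    {𝒢 : Filtration ℕ m0} {f : ℕ → Ω → ℝ} (hsup : Supermartingale f 𝒢 μ)
    (hnonneg : 0 ≤ f) {ε : ℝ≥0} (n : ℕ) :
    ε • μ {ω | (ε : ℝ) ≤ (range (n + 1)).sup' nonempty_range_add_one fun k => f k ω} ≤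
      ENNReal.ofReal (∫ ω, f 0 ω ∂μ) := by
  set τ : Ω → WithTop ℕ := fun ω => ((hittingBtwn f {y : ℝ | ↑ε ≤ y} 0 n ω : ℕ) : WithTop ℕ)
    with hτdef
  have hτ : IsStoppingTime 𝒢 τ :=
    Adapted.isStoppingTime_hittingBtwn hsup.stronglyAdapted.adapted measurableSet_Ici
  have hτle : ∀ ω, τ ω ≤ n := fun ω => WithTop.coe_le_coe.2 (hittingBtwn_le ω)
  have hint_sv : Integrable (stoppedValue f τ) μ :=
    integrable_stoppedValue ℕ hτ hsup.integrable hτle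
  have hn : Set.Icc 0 n = {k | k ≤ n} := by ext x; simp
  have hkey : ∀ ω, ((ε : ℝ) ≤ (range (n + 1)).sup' nonempty_range_add_one fun k => f k ω) →
      (ε : ℝ) ≤ stoppedValue f τ ω := by
    intro x hx
    simp_rw [le_sup'_iff, mem_range, Nat.lt_succ_iff] at hx
    refine stoppedValue_hittingBtwn_mem ?_
    simp only [Set.mem_setOf_eq, exists_prop, hn]
    exact let ⟨j, hj₁, hj₂⟩ := hx; ⟨j, hj₁, hj₂⟩
  have hmeasA : MeasurableSet {ω | (ε : ℝ) ≤ (range (n + 1)).sup' nonempty_range_add_one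
      fun k => f k ω} :=
    measurableSet_le measurable_const
      (Finset.measurable_range_sup'' fun k _ =>
        (hsup.stronglyMeasurable k).measurable.le (𝒢.le k))
  have h1 := setIntegral_ge_of_const_le hmeasA (measure_ne_top _ _) hkey
      hint_sv.integrableOn
  have hsv_nonneg : 0 ≤ᵐ[μ] stoppedValue f τ :=
    Filter.Eventually.of_forall fun ω => hnonneg _ _
  have h2 : ∫ ω in {ω | (ε : ℝ) ≤ (range (n + 1)).sup' nonempty_range_add_one fun k => f k ω},
      stoppedValue f τ ω ∂μ ≤ ∫ ω, stoppedValue f τ ω ∂μ :=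
    setIntegral_le_integral hint_sv hsv_nonneg
  have h3 : ∫ ω, stoppedValue f τ ω ∂μ ≤ ∫ ω, f 0 ω ∂μ := by
    have hneg := hsup.neg.expected_stoppedValue_mono (isStoppingTime_const 𝒢 0) hτ
      (fun ω => WithTop.coe_le_coe.2 (Nat.zero_le _)) hτle
    have e1 : stoppedValue (-f) (fun _ => ((0:ℕ) : WithTop ℕ)) = fun ω => -(f 0 ω) := rfl
    have e2 : stoppedValue (-f) τ = fun ω => -(stoppedValue f τ ω) := rfl
    replace hneg : ∫ ω, -(f 0 ω) ∂μ ≤ ∫ ω, -(stoppedValue f τ ω) ∂μ := hneg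
    rw [integral_neg, integral_neg] at hneg
    linarith
  calc ε • μ {ω | (ε : ℝ) ≤ (range (n + 1)).sup' nonempty_range_add_one fun k => f k ω}
      ≤ ENNReal.ofReal (∫ ω in {ω | (ε : ℝ) ≤ (range (n + 1)).sup' nonempty_range_add_one
          fun k => f k ω}, stoppedValue f τ ω ∂μ) := by
        rw [ENNReal.le_ofReal_iff_toReal_le, ENNReal.toReal_smul]
        · have h1' := h1
          simp only [smul_eq_mul, Measure.real] at h1'
          rw [NNReal.smul_def, smul_eq_mul]; linarith
        · exact ENNReal.mul_ne_top (by simp) (measure_ne_top _ _)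
        · exact le_trans (mul_nonneg ENNReal.toReal_nonneg ε.coe_nonneg) h1
    _ ≤ ENNReal.ofReal (∫ ω, f 0 ω ∂μ) := ENNReal.ofReal_le_ofReal (le_trans h2 h3)

theorem time_uniform_freedman
    {Ω : Type*} [MeasurableSpace Ω] (μ : Measure Ω) [IsProbabilityMeasure μ]
    (n : ℕ) (X : ℕ → Ω → ℝ) (b V : ℝ) (hb : 0 < b)
    (hmeas : ∀ i, Measurable (X i))
    (hint : ∀ i, Integrable (X i) μ) (hsq_int : ∀ i, Integrable (fun ω => (X i ω)^2) μ)
    (hbdd : ∀ i ∈ Finset.Icc 1 n, ∀ᵐ ω ∂μ, X i ω ≤ b)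
    (hmds : ∀ i ∈ Finset.Icc 1 n,
      μ[X i | ⨆ j ∈ Finset.Icc 1 (i-1), MeasurableSpace.comap (X j) inferInstance]
        =ᵐ[μ] fun _ => (0:ℝ))
    (hvar : ∀ᵐ ω ∂μ, ∑ i ∈ Finset.Icc 1 n,
      (μ[fun ω' => (X i ω')^2 |
          ⨆ j ∈ Finset.Icc 1 (i-1), MeasurableSpace.comap (X j) inferInstance]) ω
        ≤ (n : ℝ) * V)
    (δ : ℝ) (hδ : 0 < δ) (hδ1 : δ < 1) :
    1 - ENNReal.ofReal δ ≤
      μ {ω | ∀ t ∈ Finset.Icc 1 n,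
        ∑ i ∈ Finset.Icc 1 t, X i ω
          ≤ Real.sqrt (2 * n * V * Real.log (1/δ)) + b/3 * Real.log (1/δ)} := by
  classical
  set L : ℝ := Real.log (1/δ) with hL_def
  have hL : 0 < L := by
    rw [hL_def, one_div, Real.log_inv]
    linarith [Real.log_neg hδ hδ1]
  -- the filtration
  set F : ℕ → MeasurableSpace Ω :=
    fun k => ⨆ j ∈ Finset.Icc 1 k, MeasurableSpace.comap (X j) inferInstance with hF_def
  have hF_le : ∀ k, F k ≤ (inferInstance : MeasurableSpace Ω) := by
    intro k
    refine iSup₂_le fun j _ => ?_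
    exact measurable_iff_comap_le.1 (hmeas j)
  have hF_mono : Monotone F := by
    intro s t hst
    refine iSup₂_le fun j hj => ?_
    exact le_iSup₂_of_le j (Finset.mem_Icc.2 ⟨(Finset.mem_Icc.1 hj).1,
      le_trans (Finset.mem_Icc.1 hj).2 hst⟩) le_rfl
  set q : ℕ → Ω → ℝ := fun i => μ[fun ω => (X i ω)^2 | F (i-1)] with hq_def
  have hq_nonneg : ∀ i, 0 ≤ᵐ[μ] q i := fun i =>
    condExp_nonneg (Filter.Eventually.of_forall fun ω => sq_nonneg _)
  have hq_ball : ∀ᵐ ω ∂μ, ∀ i ∈ (Finset.Icc 1 n : Finset ℕ), 0 ≤ q i ω := by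
    rw [MeasureTheory.ae_all_iff]
    intro i
    by_cases hi : i ∈ Finset.Icc 1 n
    · filter_upwards [hq_nonneg i] with ω h _
      exact h
    · filter_upwards with ω h
      exact absurd h hi
  have hvar' : ∀ᵐ ω ∂μ, ∑ i ∈ Finset.Icc 1 n, q i ω ≤ (n : ℝ) * V := hvar
  have hbdd_ball : ∀ᵐ ω ∂μ, ∀ i ∈ (Finset.Icc 1 n : Finset ℕ), X i ω ≤ b := by
    rw [MeasureTheory.ae_all_iff]
    intro i
    by_cases hi : i ∈ Finset.Icc 1 n
    · filter_upwards [hbdd i hi] with ω h _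
      exact h
    · filter_upwards with ω h
      exact absurd h hi
  have hnV_nonneg : 0 ≤ (n : ℝ) * V := by
    have hne : (MeasureTheory.ae μ).NeBot := ae_neBot.2 (IsProbabilityMeasure.ne_zero μ)
    obtain ⟨ω, h1, h2⟩ := (hvar'.and hq_ball).exists
    exact le_trans (Finset.sum_nonneg fun i hi => h2 i hi) h1
  rcases eq_or_lt_of_le hnV_nonneg with hnV0 | hnVpos
  · -- degenerate case: zero variance
    have hXzero : ∀ i ∈ Finset.Icc 1 n, X i =ᵐ[μ] 0 := by
      intro i hi
      have hq0 : q i =ᵐ[μ] 0 := by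
        filter_upwards [hvar', hq_ball] with ω h1 h2
        have hle := Finset.single_le_sum (fun j hj => h2 j hj) hi
        have := h2 i hi
        have : q i ω ≤ 0 := le_trans hle (by rw [← hnV0] at h1; exact h1)
        simp only [Pi.zero_apply]
        linarith [h2 i hi]
      have hint_sq := hsq_int i
      have hI : ∫ ω, (X i ω)^2 ∂μ = 0 := by
        rw [← integral_condExp (hF_le (i-1)) (f := fun ω => (X i ω)^2)]
        rw [integral_congr_ae hq0]
        simp
      have := (integral_eq_zero_iff_of_nonneg
        (fun ω => sq_nonneg (X i ω)) hint_sq).1 hI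
      filter_upwards [this] with ω hω
      have : (X i ω)^2 = 0 := hω
      simpa using pow_eq_zero_iff (n := 2) (by norm_num) |>.1 this
    have hae : ∀ᵐ ω ∂μ, ∀ i ∈ (Finset.Icc 1 n : Finset ℕ), X i ω = 0 := by
      rw [MeasureTheory.ae_all_iff]
      intro i
      by_cases hi : i ∈ Finset.Icc 1 n
      · filter_upwards [hXzero i hi] with ω h _
        exact h
      · filter_upwards with ω h
        exact absurd h hi
    have hsub : ∀ᵐ ω ∂μ, ω ∈ {ω | ∀ t ∈ Finset.Icc 1 n,
        ∑ i ∈ Finset.Icc 1 t, X i ω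
          ≤ Real.sqrt (2 * n * V * L) + b/3 * L} := by
      filter_upwards [hae] with ω hω
      intro t ht
      have hzero : ∑ i ∈ Finset.Icc 1 t, X i ω = 0 := by
        apply Finset.sum_eq_zero
        intro i hi
        refine hω i (Finset.mem_Icc.2 ⟨(Finset.mem_Icc.1 hi).1,
          le_trans (Finset.mem_Icc.1 hi).2 (Finset.mem_Icc.1 ht).2⟩)
      rw [hzero]
      have h1 : 0 ≤ Real.sqrt (2 * n * V * L) := Real.sqrt_nonneg _
      have h2 : 0 ≤ b/3 * L := by positivity
      linarith
    calc (1 : ℝ≥0∞) - ENNReal.ofReal δ ≤ 1 := tsub_le_self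
      _ = μ Set.univ := (measure_univ).symm
      _ ≤ _ := by
        apply measure_mono_ae
        filter_upwards [hsub] with ω hω _
        exact hω
  · -- main case
    set r : ℝ := Real.sqrt ((n : ℝ) * V / (2*L)) with hr_def
    have hrpos : 0 < r := Real.sqrt_pos.2 (by positivity)
    set lam : ℝ := 1/(r + b/3) with hlam_def
    have hlam_pos : 0 < lam := by rw [hlam_def]; positivity
    have hlamb : lam * b < 3 := by
      rw [hlam_def, div_mul_eq_mul_div, div_lt_iff₀ (by positivity)]
      nlinarith
    set c : ℝ := lam^2/(2*(1 - lam*b/3)) with hc_def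
    have hden_pos : 0 < 1 - lam*b/3 := by nlinarith
    have hc_pos : 0 < c := by rw [hc_def]; positivity
    set S : ℕ → Ω → ℝ := fun t ω => ∑ i ∈ Finset.Icc 1 (min t n), X i ω with hS_def
    set Q : ℕ → Ω → ℝ := fun t ω => ∑ i ∈ Finset.Icc 1 (min t n), q i ω with hQ_def
    set M : ℕ → Ω → ℝ := fun t ω => Real.exp (lam * S t ω - c * Q t ω) with hM_def
    set 𝒢 : Filtration ℕ (inferInstance : MeasurableSpace Ω) := ⟨F, hF_mono, hF_le⟩ with h𝒢_def
    have hM_nonneg : ∀ t ω, 0 ≤ M t ω := fun t ω => (Real.exp_pos _).le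
    -- measurability
    have hX_measF : ∀ t, ∀ i ∈ Finset.Icc 1 t, Measurable[F t] (X i) := by
      intro t i hi
      refine measurable_iff_comap_le.2 ?_
      exact le_biSup (fun j => MeasurableSpace.comap (X j) inferInstance) hi
    have hS_meas : ∀ t, Measurable[F t] (S t) := by
      intro t
      apply Finset.measurable_sum
      intro i hi
      exact hX_measF t i (Finset.mem_Icc.2 ⟨(Finset.mem_Icc.1 hi).1,
        le_trans (Finset.mem_Icc.1 hi).2 (min_le_left _ _)⟩)
    have hq_measF : ∀ t i, i - 1 ≤ t → Measurable[F t] (q i) := by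
      intro t i hit
      have h1 : StronglyMeasurable[F (i-1)] (q i) := stronglyMeasurable_condExp
      exact (h1.mono (hF_mono hit)).measurable
    have hQ_meas : ∀ t, Measurable[F t] (Q t) := by
      intro t
      apply Finset.measurable_sum
      intro i hi
      exact hq_measF t i (by
        have := le_trans (Finset.mem_Icc.1 hi).2 (min_le_left t n); omega)
    have hM_adapted : StronglyAdapted 𝒢 M := by
      intro t
      apply Measurable.stronglyMeasurable
      exact Real.measurable_exp.comp (((hS_meas t).const_mul lam).sub ((hQ_meas t).const_mul c))
    have hM_measm0 : ∀ t, AEStronglyMeasurable (M t) μ := fun t =>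
      (((hM_adapted t).mono (hF_le t))).aestronglyMeasurable
    -- a.e. boundedness
    have hM_bdd : ∀ t, ∀ᵐ ω ∂μ, M t ω ≤ Real.exp (lam * (b * n)) := by
      intro t
      filter_upwards [hbdd_ball, hq_ball] with ω hbω hqω
      have hsub : Finset.Icc 1 (min t n) ⊆ Finset.Icc 1 n :=
        Finset.Icc_subset_Icc_right (min_le_right _ _)
      have hcard : ((Finset.Icc 1 (min t n)).card : ℝ) ≤ (n : ℝ) := by
        rw [Nat.card_Icc]
        exact_mod_cast by omega
      have hSle : S t ω ≤ b * n := by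
        calc S t ω ≤ ∑ _i ∈ Finset.Icc 1 (min t n), b :=
              Finset.sum_le_sum (fun i hi => hbω i (hsub hi))
          _ = ((Finset.Icc 1 (min t n)).card : ℝ) * b := by
              rw [Finset.sum_const, nsmul_eq_mul]
          _ ≤ b * n := by nlinarith
      have hQge : 0 ≤ Q t ω := Finset.sum_nonneg fun i hi => hqω i (hsub hi)
      have harg : lam * S t ω - c * Q t ω ≤ lam * (b*n) := by nlinarith
      exact Real.exp_le_exp.2 harg
    have hM_int : ∀ t, Integrable (M t) μ := by
      intro t
      refine Integrable.mono' (integrable_const (Real.exp (lam * (b*n)))) (hM_measm0 t) ?_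
      filter_upwards [hM_bdd t] with ω hω
      rw [Real.norm_eq_abs, abs_of_nonneg (hM_nonneg t ω)]
      exact hω
    -- the supermartingale step
    have hstep : ∀ t : ℕ, μ[M (t+1) | F t] ≤ᵐ[μ] M t := by
      intro t
      rcases le_or_gt n t with hnt | htn
      · have hmin : min (t+1) n = min t n := by omega
        have hMeq : M (t+1) = M t := by
          funext ω
          simp only [hM_def, hS_def, hQ_def, hmin]
        rw [hMeq, condExp_of_stronglyMeasurable (hF_le t) (hM_adapted t) (hM_int t)]
      · have ht1n : t + 1 ≤ n := htn
        have hmem : t + 1 ∈ Finset.Icc 1 n := Finset.mem_Icc.2 ⟨by omega, ht1n⟩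
        have hIcc : Finset.Icc 1 (t+1) = insert (t+1) (Finset.Icc 1 t) := by
          ext x
          simp only [Finset.mem_Icc, Finset.mem_insert]
          omega
        set G : Ω → ℝ := fun ω => M t ω * Real.exp (-(c * q (t+1) ω)) with hG_def
        set g : Ω → ℝ := fun ω => Real.exp (lam * X (t+1) ω) with hg_def
        have hsplit : M (t+1) = G * g := by
          funext ω
          simp only [hM_def, hG_def, hg_def, hS_def, hQ_def, Pi.mul_apply,
            Nat.min_eq_left ht1n, Nat.min_eq_left (le_of_lt htn), hIcc,
            Finset.sum_insert (by simp : (t+1) ∉ Finset.Icc 1 t)]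
          rw [← Real.exp_add, ← Real.exp_add]
          congr 1
          ring
        have hq_smF : StronglyMeasurable[F t] (q (t+1)) := stronglyMeasurable_condExp
        have hG_sm : StronglyMeasurable[F t] G := by
          apply Measurable.stronglyMeasurable
          exact ((hM_adapted t).measurable).mul
            (Real.measurable_exp.comp ((hq_smF.measurable.const_mul c).neg))
        have hg_bdd : ∀ᵐ ω ∂μ, ‖g ω‖ ≤ Real.exp (lam * b) := by
          filter_upwards [hbdd (t+1) hmem] with ω hω
          rw [hg_def, Real.norm_eq_abs, abs_of_pos (Real.exp_pos _)]
          exact Real.exp_le_exp.2 (by nlinarith)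
        have hg_meas : AEStronglyMeasurable g μ :=
          (Real.measurable_exp.comp ((hmeas (t+1)).const_mul lam)).aestronglyMeasurable
        have hg_int : Integrable g μ := Integrable.mono' (integrable_const _) hg_meas hg_bdd
        have hGg_int : Integrable (G * g) μ := by rw [← hsplit]; exact hM_int (t+1)
        have hpull := condExp_mul_of_stronglyMeasurable_left hG_sm hGg_int hg_int
        have hptw : g ≤ᵐ[μ] fun ω => 1 + lam * X (t+1) ω + c * (X (t+1) ω)^2 := by
          filter_upwards [hbdd (t+1) hmem] with ω hω
          have hber := bernstein_pointwise hlam_pos hb hlamb hω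
          calc g ω = Real.exp (lam * X (t+1) ω) := rfl
            _ ≤ 1 + lam * X (t+1) ω + lam^2/(2*(1-lam*b/3)) * (X (t+1) ω)^2 := hber
            _ = 1 + lam * X (t+1) ω + c * (X (t+1) ω)^2 := by rw [hc_def]
        have hRHS_int : Integrable (fun ω => 1 + lam * X (t+1) ω + c * (X (t+1) ω)^2) μ :=
          ((integrable_const (1:ℝ)).add ((hint (t+1)).const_mul lam)).add
            ((hsq_int (t+1)).const_mul c)
        have hcond1 := condExp_mono (m := F t) hg_int hRHS_int hptw
        -- compute the conditional expectation of the RHS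
        have hadd1 : μ[fun ω => 1 + lam * X (t+1) ω + c * (X (t+1) ω)^2 | F t]
            =ᵐ[μ] μ[fun ω => 1 + lam * X (t+1) ω | F t] + μ[fun ω => c * (X (t+1) ω)^2 | F t] :=
          condExp_add ((integrable_const (1:ℝ)).add ((hint (t+1)).const_mul lam))
            ((hsq_int (t+1)).const_mul c) (F t)
        have hadd2 : μ[fun ω => 1 + lam * X (t+1) ω | F t]
            =ᵐ[μ] μ[fun _ => (1:ℝ) | F t] + μ[fun ω => lam * X (t+1) ω | F t] :=
          condExp_add (integrable_const (1:ℝ)) ((hint (t+1)).const_mul lam) (F t)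
        have hconst : μ[(fun _ => (1:ℝ)) | F t] = fun _ => (1:ℝ) := condExp_const (hF_le t) (1:ℝ)
        have hsmul1 : μ[fun ω => lam * X (t+1) ω | F t]
            =ᵐ[μ] fun ω => lam * (μ[X (t+1) | F t]) ω := by
          have := condExp_smul (μ := μ) lam (X (t+1)) (F t)
          exact this
        have hmds' : μ[X (t+1) | F t] =ᵐ[μ] fun _ => (0:ℝ) := hmds (t+1) hmem
        have hsmul2 : μ[fun ω => c * (X (t+1) ω)^2 | F t]
            =ᵐ[μ] fun ω => c * q (t+1) ω := by
          have := condExp_smul (μ := μ) c (fun ω => (X (t+1) ω)^2) (F t)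
          exact this
        have hcond2 : μ[fun ω => 1 + lam * X (t+1) ω + c * (X (t+1) ω)^2 | F t]
            ≤ᵐ[μ] fun ω => 1 + c * q (t+1) ω := by
          filter_upwards [hadd1, hadd2, hsmul1, hmds', hsmul2] with ω h1 h2 h3 h4 h5
          rw [h1]
          simp only [Pi.add_apply]
          rw [h2]
          simp only [Pi.add_apply, hconst]
          rw [h3, h4, h5]
          simp
        filter_upwards [hpull, hcond1, hcond2, hq_nonneg (t+1)] with ω h1 h2 h3 h4
        have hGnn : 0 ≤ G ω :=
          mul_nonneg (hM_nonneg t ω) (Real.exp_pos _).le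
        have hcondle : (μ[g | F t]) ω ≤ 1 + c * q (t+1) ω := le_trans h2 h3
        have hstep1 : (μ[M (t+1) | F t]) ω ≤ G ω * (1 + c * q (t+1) ω) := by
          rw [hsplit]
          calc (μ[G * g | F t]) ω = G ω * (μ[g | F t]) ω := h1
            _ ≤ G ω * (1 + c * q (t+1) ω) := mul_le_mul_of_nonneg_left hcondle hGnn
        refine hstep1.trans ?_
        have hq0 : 0 ≤ c * q (t+1) ω := mul_nonneg hc_pos.le h4
        have hexpineq := exp_neg_mul_one_add_le hq0
        calc G ω * (1 + c * q (t+1) ω)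
            = M t ω * (Real.exp (-(c * q (t+1) ω)) * (1 + c * q (t+1) ω)) := by
              rw [hG_def]; ring
          _ ≤ M t ω * 1 := mul_le_mul_of_nonneg_left hexpineq (hM_nonneg t ω)
          _ = M t ω := mul_one _
    have hsuper : Supermartingale M 𝒢 μ := supermartingale_nat hM_adapted hM_int hstep
    have hM0 : M 0 = fun _ => (1:ℝ) := by
      funext ω
      simp [hM_def, hS_def, hQ_def, Finset.Icc_eq_empty_of_lt (by omega : (0:ℕ) < 1)]
    have hintM0 : ∫ ω, M 0 ω ∂μ = 1 := by rw [hM0]; simp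
    set ε : ℝ≥0 := ⟨1/δ, by positivity⟩ with hε_def
    have hεcoe : (ε : ℝ) = 1/δ := rfl
    have hville := ville_sup hsuper (fun t ω => (Real.exp_pos _).le) (ε := ε) n
    rw [hintM0] at hville
    set A := {ω | (ε:ℝ) ≤ (Finset.range (n+1)).sup' Finset.nonempty_range_add_one
      fun k => M k ω} with hA_def
    have hA_meas : MeasurableSet A :=
      measurableSet_le measurable_const
        (Finset.measurable_range_sup'' fun k _ =>
          ((hM_adapted k).measurable).le (hF_le k))
    have hμA : μ A ≤ ENNReal.ofReal δ := by
      have h1 : (ε : ℝ≥0∞) * μ A ≤ 1 := by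
        have := hville
        rwa [ENNReal.smul_def, smul_eq_mul, ENNReal.ofReal_one] at this
      have h2 : μ A ≤ (ε : ℝ≥0∞)⁻¹ :=
        ENNReal.le_inv_iff_mul_le.2 (by rwa [mul_comm])
      refine h2.trans_eq ?_
      have hεe : (ε : ℝ≥0∞) = ENNReal.ofReal (1/δ) :=
        (ENNReal.ofReal_eq_coe_nnreal (by positivity : (0:ℝ) ≤ 1/δ)).symm
      rw [hεe, ← ENNReal.ofReal_inv_of_pos (by positivity : (0:ℝ) < 1/δ), one_div, inv_inv]
    have hAc : 1 - ENNReal.ofReal δ ≤ μ Aᶜ := by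
      rw [prob_compl_eq_one_sub hA_meas]
      exact tsub_le_tsub_left hμA 1
    refine le_trans hAc (measure_mono_ae ?_)
    rw [ae_le_set]
    have himp : ∀ᵐ ω ∂μ, ω ∈ Aᶜ → ω ∈ {ω | ∀ t ∈ Finset.Icc 1 n,
        ∑ i ∈ Finset.Icc 1 t, X i ω ≤ Real.sqrt (2 * n * V * L) + b/3 * L} := by
      filter_upwards [hq_ball, hvar'] with ω hq hv hωA
      intro t ht
      obtain ⟨ht1, htn⟩ := Finset.mem_Icc.1 ht
      have hMlt : M t ω < 1/δ := by
        have hmem' : t ∈ Finset.range (n+1) := Finset.mem_range.2 (by omega)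
        have hle := Finset.le_sup' (fun k => M k ω) hmem'
        have hnotin : ¬ ((ε:ℝ) ≤ (Finset.range (n+1)).sup' Finset.nonempty_range_add_one
            fun k => M k ω) := hωA
        rw [hεcoe] at hnotin
        exact lt_of_le_of_lt hle (not_le.1 hnotin)
      have hexplt : lam * S t ω - c * Q t ω < L := by
        have h1δ : (0:ℝ) < 1/δ := by positivity
        rw [← Real.exp_log h1δ] at hMlt
        exact Real.exp_lt_exp.1 hMlt
      have hQle : Q t ω ≤ (n:ℝ)*V := by
        have hsubset : Finset.Icc 1 (min t n) ⊆ Finset.Icc 1 n :=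
          Finset.Icc_subset_Icc_right (min_le_right _ _)
        have hQQ : Q t ω ≤ ∑ i ∈ Finset.Icc 1 n, q i ω :=
          Finset.sum_le_sum_of_subset_of_nonneg hsubset (fun i hi _ => hq i hi)
        exact hQQ.trans hv
      have hkey : lam * S t ω < c * ((n:ℝ)*V) + L := by nlinarith
      have halg := freedman_algebra (nV := (n:ℝ)*V) hb hL hnVpos hr_def hlam_def hc_def
      have hlamS : lam * S t ω < lam * (Real.sqrt (2*((n:ℝ)*V)*L) + b/3*L) := by
        rw [← halg]; exact hkey
      have hfin := (mul_lt_mul_iff_right₀ hlam_pos).1 hlamS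
      have hSt : S t ω = ∑ i ∈ Finset.Icc 1 t, X i ω := by
        simp only [hS_def, Nat.min_eq_left htn]
      rw [hSt] at hfin
      have harg : 2*((n:ℝ)*V)*L = 2 * (n:ℝ) * V * L := by ring
      rw [harg] at hfin
      exact le_of_lt hfin
    have hsubset2 : Aᶜ \ {ω | ∀ t ∈ Finset.Icc 1 n,
        ∑ i ∈ Finset.Icc 1 t, X i ω ≤ Real.sqrt (2 * n * V * L) + b/3 * L}
        ⊆ {ω | ¬ (ω ∈ Aᶜ → ω ∈ {ω | ∀ t ∈ Finset.Icc 1 n,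
        ∑ i ∈ Finset.Icc 1 t, X i ω ≤ Real.sqrt (2 * n * V * L) + b/3 * L})} := by
      intro ω hω
      simp only [Set.mem_diff] at hω
      simp only [Set.mem_setOf_eq]
      intro hcon
      exact hω.2 (hcon hω.1)
    refine measure_mono_null hsubset2 ?_
    exact ae_iff.1 himp
end

section
/- Let X_1, ..., X_n ∈ [0,1] be i.i.d. with variance σ², and let δ ∈ (0,1). Then with probability at least 1 - δ, simultaneously for all 1 ≤ t ≤ n: |Σ_{i=1}^t (X_i - E[X])| ≤ sqrt(2·n·σ²·log(2/δ)) + (1/3)·log(2/δ). -/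
open MeasureTheory ProbabilityTheory

lemma real_exp_tsum (x : ℝ) : Real.exp x = ∑' n : ℕ, x ^ n / n.factorial := by
  rw [Real.exp_eq_exp_ℝ, NormedSpace.exp_eq_tsum_div]

lemma summable_tail (x : ℝ) : Summable (fun n : ℕ => x ^ (n + 2) / (n + 2).factorial) :=
  (summable_nat_add_iff 2).2 (Real.summable_pow_div_factorial x)

lemma exp_tail (x : ℝ) :
    Real.exp x = 1 + x + ∑' n : ℕ, x ^ (n + 2) / (n + 2).factorial := by
  have h := Summable.sum_add_tsum_nat_add 2 (Real.summable_pow_div_factorial x)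
  rw [real_exp_tsum x, ← h]
  simp [Finset.sum_range_succ, Nat.factorial]

lemma fact_ge (n : ℕ) : (2 * 3 ^ n : ℝ) ≤ (n + 2).factorial := by
  induction n with
  | zero => norm_num [Nat.factorial]
  | succ k ih =>
    have h3 : ((k + 3).factorial : ℝ) = (k + 3) * (k + 2).factorial := by
      rw [show k + 3 = (k + 2) + 1 from rfl, Nat.factorial_succ]; push_cast; ring
    calc (2 * 3 ^ (k+1) : ℝ) = 3 * (2 * 3 ^ k) := by ring
    _ ≤ 3 * (k + 2).factorial := by nlinarith [pow_pos (by norm_num : (0:ℝ) < 3) k]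
    _ ≤ (k + 3) * (k + 2).factorial := by
        have : (0:ℝ) ≤ (k + 2).factorial := by positivity
        nlinarith
    _ = ((k + 1) + 2).factorial := by rw [h3]

-- Lemma B
lemma exp_sub_le' {l : ℝ} (h0 : 0 ≤ l) (h3 : l < 3) :
    Real.exp l - 1 - l ≤ l ^ 2 / 2 * (1 - l / 3)⁻¹ := by
  have hr0 : 0 ≤ l / 3 := by linarith
  have hr1 : l / 3 < 1 := by linarith
  have hgeo : Summable (fun n : ℕ => l ^ 2 / 2 * (l / 3) ^ n) :=
    (summable_geometric_of_lt_one hr0 hr1).mul_left _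
  have hterm : ∀ n : ℕ, l ^ (n + 2) / (n + 2).factorial ≤ l ^ 2 / 2 * (l / 3) ^ n := by
    intro n
    have hf := fact_ge n
    have hfp : (0:ℝ) < (n + 2).factorial := by positivity
    have hp : (0:ℝ) ≤ l ^ (n + 2) := by positivity
    have key : l ^ (n + 2) = l ^ 2 * l ^ n := by ring
    rw [div_le_iff₀ hfp, key]
    have h2 : l ^ 2 / 2 * (l / 3) ^ n * (2 * 3 ^ n) = l ^ 2 * l ^ n := by
      rw [div_pow]; field_simp
    calc l ^ 2 * l ^ n = l ^ 2 / 2 * (l / 3) ^ n * (2 * 3 ^ n) := h2.symm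
    _ ≤ l ^ 2 / 2 * (l / 3) ^ n * (n + 2).factorial := by
        apply mul_le_mul_of_nonneg_left hf; positivity
  have := Summable.tsum_le_tsum hterm (summable_tail l) hgeo
  rw [tsum_mul_left, tsum_geometric_of_lt_one hr0 hr1] at this
  have hexp := exp_tail l
  rw [hexp]; linarith

-- Lemma A
lemma exp_mul_le' {l y : ℝ} (h0 : 0 ≤ l) (hy : |y| ≤ 1) :
    Real.exp (l * y) ≤ 1 + l * y + y ^ 2 * (Real.exp l - 1 - l) := by
  have hterm : ∀ n : ℕ, (l * y) ^ (n + 2) / (n + 2).factorial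
      ≤ y ^ 2 * (l ^ (n + 2) / (n + 2).factorial) := by
    intro n
    have hfp : (0:ℝ) < (n + 2).factorial := by positivity
    rw [div_le_iff₀ hfp]
    have h1 : y ^ (n + 2) ≤ y ^ 2 := by
      calc y ^ (n + 2) ≤ |y ^ (n + 2)| := le_abs_self _
      _ = |y| ^ (n + 2) := by rw [abs_pow]
      _ ≤ |y| ^ 2 := pow_le_pow_of_le_one (abs_nonneg y) hy (by omega)
      _ = y ^ 2 := sq_abs y
    have hlp : (0:ℝ) ≤ l ^ (n + 2) := by positivity
    calc (l * y) ^ (n + 2) = l ^ (n + 2) * y ^ (n + 2) := by rw [mul_pow]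
    _ ≤ l ^ (n + 2) * y ^ 2 := by exact mul_le_mul_of_nonneg_left h1 hlp
    _ = y ^ 2 * (l ^ (n + 2) / (n + 2).factorial) * (n + 2).factorial := by
        field_simp
  have hsum := Summable.tsum_le_tsum hterm (summable_tail (l * y))
    ((summable_tail l).mul_left (y ^ 2))
  rw [tsum_mul_left] at hsum
  have e1 := exp_tail (l * y)
  have e2 := exp_tail l
  have : ∑' n : ℕ, l ^ (n + 2) / (n + 2).factorial = Real.exp l - 1 - l := by
    rw [e2]; ring
  rw [this] at hsum
  rw [e1]; linarith

lemma oneSided {Ω : Type*} [MeasurableSpace Ω] (μ : Measure Ω) [IsProbabilityMeasure μ]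
    (n : ℕ) (Y : ℕ → Ω → ℝ) (σ2 L b l : ℝ)
    (hmeas : ∀ i, Measurable (Y i))
    (hindep : iIndepFun Y μ)
    (hbdd : ∀ i, ∀ᵐ ω ∂μ, |Y i ω| ≤ 1)
    (hmean : ∀ i, ∫ ω, Y i ω ∂μ = 0)
    (hsq : ∀ i, ∫ ω, (Y i ω) ^ 2 ∂μ ≤ σ2)
    (hσ : 0 ≤ σ2) (hl : 0 < l) (hb : 0 ≤ b)
    (hkey : n * σ2 * (Real.exp l - 1 - l) ≤ l * b - L) :
    μ {ω | ∃ t ∈ Finset.Icc 1 n, b < ∑ i ∈ Finset.Icc 1 t, Y i ω}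
      ≤ ENNReal.ofReal (Real.exp (-L)) := by
  classical
  set c : ℝ := Real.exp l - 1 - l with hc_def
  have hc0 : 0 ≤ c := by nlinarith [Real.add_one_le_exp l]
  set S : ℕ → Ω → ℝ := fun t ω => ∑ i ∈ Finset.Ioc 0 t, Y i ω with hS_def
  have hicc : ∀ t, Finset.Icc 1 t = Finset.Ioc 0 t := fun t => Finset.Icc_add_one_left_eq_Ioc 0 t
  have hSmeas : ∀ t, Measurable (S t) := fun t => Finset.measurable_sum _ (fun i _ => hmeas i)
  -- integrability helpers
  have hintY : ∀ i, Integrable (Y i) μ := fun i =>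
    (integrable_const (1 : ℝ)).mono' (hmeas i).aestronglyMeasurable
      (by filter_upwards [hbdd i] with ω h; simpa using h)
  have hbddS : ∀ t, ∀ᵐ ω ∂μ, |S t ω| ≤ t := by
    intro t
    filter_upwards [ae_all_iff.2 hbdd] with ω h
    calc |S t ω| ≤ ∑ i ∈ Finset.Ioc 0 t, |Y i ω| := Finset.abs_sum_le_sum_abs _ _
    _ ≤ ∑ _i ∈ Finset.Ioc 0 t, (1 : ℝ) := Finset.sum_le_sum (fun i _ => h i)
    _ = t := by simp
  have hintExpS : ∀ t, Integrable (fun ω => Real.exp (l * S t ω)) μ := by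
    intro t
    refine (integrable_const (Real.exp (l * t))).mono'
      ((Real.measurable_exp.comp ((hSmeas t).const_mul l)).aestronglyMeasurable) ?_
    filter_upwards [hbddS t] with ω h
    rw [Real.norm_eq_abs, abs_of_pos (Real.exp_pos _), Real.exp_le_exp]
    have := (abs_le.1 h).2
    nlinarith
  have hintExpY : ∀ i, Integrable (fun ω => Real.exp (l * Y i ω)) μ := by
    intro i
    refine (integrable_const (Real.exp l)).mono'
      ((Real.measurable_exp.comp ((hmeas i).const_mul l)).aestronglyMeasurable) ?_
    filter_upwards [hbdd i] with ω h
    rw [Real.norm_eq_abs, abs_of_pos (Real.exp_pos _), Real.exp_le_exp]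
    have := (abs_le.1 h).2
    nlinarith
  -- mgf bound
  have hmgf : ∀ i, ∫ ω, Real.exp (l * Y i ω) ∂μ ≤ 1 + σ2 * c := by
    intro i
    have hintY2 : Integrable (fun ω => (Y i ω) ^ 2) μ := by
      refine (integrable_const (1 : ℝ)).mono'
        (((hmeas i).pow_const 2).aestronglyMeasurable) ?_
      filter_upwards [hbdd i] with ω h
      rw [Real.norm_eq_abs, abs_pow]
      simpa using pow_le_pow_left₀ (abs_nonneg _) h 2
    have h1int : Integrable (fun ω => l * Y i ω) μ := (hintY i).const_mul l
    have hfint : Integrable (fun ω => 1 + l * Y i ω) μ := (integrable_const 1).add h1int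
    have hgint : Integrable (fun ω => (Y i ω) ^ 2 * c) μ := hintY2.mul_const c
    have hintRHS : Integrable (fun ω => 1 + l * Y i ω + (Y i ω) ^ 2 * c) μ :=
      hfint.add hgint
    have h1 : ∫ ω, Real.exp (l * Y i ω) ∂μ ≤ ∫ ω, (1 + l * Y i ω + (Y i ω) ^ 2 * c) ∂μ := by
      refine integral_mono_ae (hintExpY i) hintRHS ?_
      filter_upwards [hbdd i] with ω h
      exact exp_mul_le' hl.le h
    have h2 : ∫ ω, (1 + l * Y i ω + (Y i ω) ^ 2 * c) ∂μ = 1 + (∫ ω, (Y i ω) ^ 2 ∂μ) * c := by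
      rw [integral_add hfint hgint, integral_add (integrable_const (1:ℝ)) h1int,
        integral_const, integral_const_mul, integral_mul_const, hmean i]
      simp
    rw [h2] at h1
    have := mul_le_mul_of_nonneg_right (hsq i) hc0
    linarith
  have hExpS_nonneg : ∀ t, 0 ≤ ∫ ω, Real.exp (l * S t ω) ∂μ := fun t =>
    integral_nonneg fun ω => (Real.exp_pos _).le
  -- recursion: E exp(l S_t) ≤ (1+σ2 c)^t
  have h1c : (0:ℝ) ≤ 1 + σ2 * c := by nlinarith
  have hrec : ∀ t, ∫ ω, Real.exp (l * S t ω) ∂μ ≤ (1 + σ2 * c) ^ t := by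
    intro t
    induction t with
    | zero => simp [hS_def]
    | succ t ih =>
      have hsplit : ∀ ω, S (t + 1) ω = S t ω + Y (t + 1) ω := by
        intro ω
        simp only [hS_def]
        rw [← Finset.sum_Ioc_succ_top (Nat.zero_le t)]
      have hind2 : IndepFun (fun ω => Real.exp (l * S t ω))
          (fun ω => Real.exp (l * Y (t + 1) ω)) μ := by
        have h0 : IndepFun (∑ j ∈ Finset.Ioc 0 t, Y j) (Y (t + 1)) μ :=
          hindep.indepFun_finsetSum_of_notMem hmeas (by simp)
        have h1 := h0.comp (φ := fun x : ℝ => Real.exp (l * x))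
          (ψ := fun x : ℝ => Real.exp (l * x))
          (Real.measurable_exp.comp (measurable_const_mul l))
          (Real.measurable_exp.comp (measurable_const_mul l))
        have e1 : (fun x : ℝ => Real.exp (l * x)) ∘ (∑ j ∈ Finset.Ioc 0 t, Y j)
            = fun ω => Real.exp (l * S t ω) := by
          funext ω; simp [hS_def, Function.comp, Finset.sum_apply]
        have e2 : (fun x : ℝ => Real.exp (l * x)) ∘ (Y (t + 1))
            = fun ω => Real.exp (l * Y (t + 1) ω) := rfl
        rwa [e1, e2] at h1
      have hprodd : ∫ ω, Real.exp (l * S (t + 1) ω) ∂μ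
          = (∫ ω, Real.exp (l * S t ω) ∂μ) * ∫ ω, Real.exp (l * Y (t + 1) ω) ∂μ := by
        rw [← hind2.integral_mul_eq_mul_integral (hintExpS t).aestronglyMeasurable (hintExpY (t + 1)).aestronglyMeasurable]
        congr 1; funext ω
        rw [hsplit ω, mul_add, Real.exp_add]; rfl
      rw [hprodd, pow_succ]
      exact mul_le_mul ih (hmgf (t + 1)) (integral_nonneg fun ω => (Real.exp_pos _).le)
        (by positivity)
  have hintS : ∀ t, Integrable (S t) μ :=
    fun t => integrable_finset_sum _ (fun i _ => hintY i)
  have hES : ∀ u, ∫ ω, S u ω ∂μ = 0 := by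
    intro u
    rw [hS_def]
    rw [integral_finset_sum _ (fun i _ => hintY i)]
    exact Finset.sum_eq_zero fun i _ => hmean i
  -- the first-passage sets
  set A : ℕ → Set Ω := fun t => {ω | b < S t ω ∧ ∀ u < t, S u ω ≤ b} with hA_def
  have hAmeas : ∀ t, MeasurableSet (A t) := by
    intro t
    have h1 : MeasurableSet {ω | b < S t ω} := measurableSet_lt measurable_const (hSmeas t)
    have h2 : MeasurableSet {ω | ∀ u < t, S u ω ≤ b} := by
      have e : {ω | ∀ u < t, S u ω ≤ b} = ⋂ u, ⋂ (_ : u < t), {ω | S u ω ≤ b} := by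
        ext ω; simp
      rw [e]
      exact MeasurableSet.iInter fun u => MeasurableSet.iInter fun _ =>
        measurableSet_le (hSmeas u) measurable_const
    exact h1.inter h2
  have hdisjkey : ∀ u v : ℕ, u < v → Disjoint (A u) (A v) := by
    intro u v huv
    rw [Set.disjoint_left]
    intro ω hu hv
    exact absurd hu.1 (not_lt.2 (hv.2 u huv))
  have hdisj : (↑(Finset.Icc 1 n) : Set ℕ).PairwiseDisjoint A := by
    intro t1 _ t2 _ hne
    rcases hne.lt_or_gt with h | h
    · exact hdisjkey _ _ h
    · exact (hdisjkey _ _ h).symm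
  have hS0 : ∀ ω, S 0 ω = 0 := by intro ω; simp [hS_def]
  have hcover : {ω | ∃ t ∈ Finset.Icc 1 n, b < ∑ i ∈ Finset.Icc 1 t, Y i ω}
      ⊆ ⋃ t ∈ Finset.Icc 1 n, A t := by
    intro ω hω
    obtain ⟨t0, ht0mem, ht0⟩ := hω
    rw [hicc t0] at ht0
    have hex : ∃ t, b < S t ω := ⟨t0, ht0⟩
    have htb : b < S (Nat.find hex) ω := Nat.find_spec hex
    have htmin : ∀ u < Nat.find hex, S u ω ≤ b := fun u hu =>
      le_of_not_gt (Nat.find_min hex hu)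
    have ht1 : 1 ≤ Nat.find hex := by
      by_contra h
      have h0 : Nat.find hex = 0 := by omega
      rw [h0, hS0 ω] at htb
      exact absurd hb (not_le.2 htb)
    have htn : Nat.find hex ≤ n :=
      le_trans (Nat.find_le ht0) (Finset.mem_Icc.1 ht0mem).2
    exact Set.mem_biUnion (Finset.mem_Icc.2 ⟨ht1, htn⟩) ⟨htb, htmin⟩
  -- integrability of the indicator products
  have hindmeas : ∀ t, Measurable (Set.indicator (A t) (fun _ => (1:ℝ))) :=
    fun t => measurable_const.indicator (hAmeas t)
  have hindbd : ∀ t ω, |Set.indicator (A t) (fun _ => (1:ℝ)) ω| ≤ 1 := by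
    intro t ω; by_cases hω : ω ∈ A t <;> simp [hω]
  have hindnn : ∀ t ω, 0 ≤ Set.indicator (A t) (fun _ => (1:ℝ)) ω := by
    intro t ω; by_cases hω : ω ∈ A t <;> simp [hω]
  have hintF : ∀ t u, Integrable
      (fun ω => Set.indicator (A t) (fun _ => (1:ℝ)) ω * Real.exp (l * S u ω)) μ := by
    intro t u
    refine (integrable_const (Real.exp (l * u))).mono'
      (((hindmeas t).mul (Real.measurable_exp.comp ((hSmeas u).const_mul l))).aestronglyMeasurable) ?_
    filter_upwards [hbddS u] with ω h
    rw [Real.norm_eq_abs, abs_mul, abs_of_pos (Real.exp_pos _)]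
    have h1 := hindbd t ω
    have h2 : Real.exp (l * S u ω) ≤ Real.exp (l * u) := by
      rw [Real.exp_le_exp]
      have := (abs_le.1 h).2
      nlinarith
    nlinarith [Real.exp_pos (l * S u ω), hindnn t ω, abs_nonneg
      (Set.indicator (A t) (fun _ => (1:ℝ)) ω)]
  -- key per-t inequality
  have hperT : ∀ t ∈ Finset.Icc 1 n,
      Real.exp (l * b) * (μ (A t)).toReal
        ≤ ∫ ω, Set.indicator (A t) (fun _ => (1:ℝ)) ω * Real.exp (l * S n ω) ∂μ := by
    intro t htmem
    obtain ⟨ht1, htn⟩ := Finset.mem_Icc.1 htmem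
    set f : Ω → ℝ := fun ω => Set.indicator (A t) (fun _ => (1:ℝ)) ω * Real.exp (l * S t ω)
      with hf_def
    set g : Ω → ℝ := fun ω => Real.exp (l * (S n ω - S t ω)) with hg_def
    have hZ : ∀ ω, S n ω - S t ω = ∑ i ∈ Finset.Ioc t n, Y i ω := by
      intro ω
      have := Finset.sum_Ioc_consecutive (fun i => Y i ω) (Nat.zero_le t) htn
      simp only [hS_def]
      linarith [this]
    have hgmeas : Measurable g :=
      Real.measurable_exp.comp ((((hSmeas n).sub (hSmeas t)).const_mul l))
    have hgint : Integrable g μ := by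
      refine (integrable_const (Real.exp (l * (n + n)))).mono'
        hgmeas.aestronglyMeasurable ?_
      filter_upwards [hbddS n, hbddS t] with ω h1 h2
      rw [hg_def]
      rw [Real.norm_eq_abs, abs_of_pos (Real.exp_pos _), Real.exp_le_exp]
      have ha := (abs_le.1 h1).2
      have hb2 := (abs_le.1 h2).1
      have hcast : (t:ℝ) ≤ n := Nat.cast_le.2 htn
      nlinarith
    -- step (i)
    have hstep1 : Real.exp (l * b) * (μ (A t)).toReal ≤ ∫ ω, f ω ∂μ := by
      have hconst : ∫ ω, Set.indicator (A t) (fun _ => Real.exp (l * b)) ω ∂μ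
          = (μ (A t)).toReal • Real.exp (l * b) := integral_indicator_const _ (hAmeas t)
      have hmono : ∀ ω, Set.indicator (A t) (fun _ => Real.exp (l * b)) ω ≤ f ω := by
        intro ω
        by_cases hω : ω ∈ A t
        · rw [hf_def]
          simp only [Set.indicator_of_mem hω]
          rw [one_mul, Real.exp_le_exp]
          exact mul_le_mul_of_nonneg_left hω.1.le hl.le
        · rw [hf_def]; simp [Set.indicator_of_notMem hω]
      have hintc : Integrable (Set.indicator (A t) (fun _ => Real.exp (l * b))) μ :=
        (integrable_const _).indicator (hAmeas t)
      calc Real.exp (l * b) * (μ (A t)).toReal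
          = ∫ ω, Set.indicator (A t) (fun _ => Real.exp (l * b)) ω ∂μ := by
            rw [hconst, smul_eq_mul]; ring
      _ ≤ ∫ ω, f ω ∂μ := integral_mono hintc (hintF t t) hmono
    -- E g ≥ 1
    have hge1 : 1 ≤ ∫ ω, g ω ∂μ := by
      have hintZ : Integrable (fun ω => S n ω - S t ω) μ := (hintS n).sub (hintS t)
      have hintlZ : Integrable (fun ω => l * (S n ω - S t ω)) μ := hintZ.const_mul l
      have hintlin : Integrable (fun ω => 1 + l * (S n ω - S t ω)) μ :=
        (integrable_const 1).add hintlZ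
      have heq : ∫ ω, (1 + l * (S n ω - S t ω)) ∂μ = 1 := by
        rw [integral_add (integrable_const 1) hintlZ,
          integral_const, integral_const_mul, integral_sub (hintS n) (hintS t), hES n, hES t]
        simp
      have hmono2 : ∀ ω, 1 + l * (S n ω - S t ω) ≤ g ω := by
        intro ω
        have := Real.add_one_le_exp (l * (S n ω - S t ω))
        rw [hg_def]; dsimp only; linarith
      calc (1:ℝ) = ∫ ω, (1 + l * (S n ω - S t ω)) ∂μ := heq.symm
      _ ≤ ∫ ω, g ω ∂μ := integral_mono hintlin hgint hmono2
    -- independence of f and g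
    have hind3 : IndepFun f g μ := by
      have hdisjT : Disjoint (Finset.Ioc 0 t) (Finset.Ioc t n) := by
        rw [Finset.disjoint_left]
        intro a ha hb2
        rw [Finset.mem_Ioc] at ha hb2
        omega
      have h0 := hindep.indepFun_finset (Finset.Ioc 0 t) (Finset.Ioc t n) hdisjT hmeas
      set g1 : ℕ → ((Finset.Ioc 0 t : Finset ℕ) → ℝ) → ℝ :=
        fun u x => ∑ i : (Finset.Ioc 0 t : Finset ℕ), if (i : ℕ) ≤ u then x i else 0 with hg1
      have hg1meas : ∀ u, Measurable (g1 u) := by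
        intro u
        apply Finset.measurable_sum
        intro i _
        by_cases h : (i : ℕ) ≤ u
        · simpa [h] using measurable_pi_apply i
        · simpa [h] using (measurable_const : Measurable fun _ :
            ((Finset.Ioc 0 t : Finset ℕ) → ℝ) => (0:ℝ))
      set φ : ((Finset.Ioc 0 t : Finset ℕ) → ℝ) → ℝ := fun x =>
        Set.indicator {x' | b < g1 t x' ∧ ∀ u < t, g1 u x' ≤ b} (fun _ => (1:ℝ)) x
          * Real.exp (l * g1 t x) with hφ
      have hsetmeas : MeasurableSet {x' : (Finset.Ioc 0 t : Finset ℕ) → ℝ |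
          b < g1 t x' ∧ ∀ u < t, g1 u x' ≤ b} := by
        have e : {x' : (Finset.Ioc 0 t : Finset ℕ) → ℝ | b < g1 t x' ∧ ∀ u < t, g1 u x' ≤ b}
            = {x' | b < g1 t x'} ∩ ⋂ u, ⋂ (_ : u < t), {x' | g1 u x' ≤ b} := by
          ext x; simp
        rw [e]
        exact (measurableSet_lt measurable_const (hg1meas t)).inter
          (MeasurableSet.iInter fun u => MeasurableSet.iInter fun _ =>
            measurableSet_le (hg1meas u) measurable_const)
      have hφmeas : Measurable φ :=
        (measurable_const.indicator hsetmeas).mul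
          (Real.measurable_exp.comp ((hg1meas t).const_mul l))
      have hψmeas : Measurable (fun x : ↥(Finset.Ioc t n) → ℝ =>
          Real.exp (l * (∑ i : ↥(Finset.Ioc t n), x i))) :=
        Real.measurable_exp.comp
          ((Finset.measurable_sum _ fun i _ => measurable_pi_apply i).const_mul l)
      have h1 := h0.comp hφmeas hψmeas
      have hg1Y : ∀ u, u ≤ t → ∀ ω, g1 u (fun i : (Finset.Ioc 0 t : Finset ℕ) => Y i ω) = S u ω := by
        intro u hu ω
        simp only [hg1]
        have e1 : (∑ i : (Finset.Ioc 0 t : Finset ℕ), if (i : ℕ) ≤ u then Y (i : ℕ) ω else 0)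
            = ∑ i ∈ Finset.Ioc 0 t, (if i ≤ u then Y i ω else 0) :=
          Finset.sum_coe_sort (Finset.Ioc 0 t) (fun j => if j ≤ u then Y j ω else 0)
        rw [e1, ← Finset.sum_filter]
        have e2 : (Finset.Ioc 0 t).filter (· ≤ u) = Finset.Ioc 0 u := by
          ext i
          simp only [Finset.mem_filter, Finset.mem_Ioc]
          omega
        rw [e2]
      have hmem : ∀ ω, ((fun i : (Finset.Ioc 0 t : Finset ℕ) => Y i ω) ∈
          {x' | b < g1 t x' ∧ ∀ u < t, g1 u x' ≤ b}) ↔ ω ∈ A t := by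
        intro ω
        constructor
        · rintro ⟨h1', h2'⟩
          refine ⟨by rwa [hg1Y t le_rfl ω] at h1', fun u hu => ?_⟩
          have := h2' u hu
          rwa [hg1Y u (le_of_lt hu) ω] at this
        · rintro ⟨h1', h2'⟩
          refine ⟨by rwa [hg1Y t le_rfl ω], fun u hu => ?_⟩
          rw [hg1Y u (le_of_lt hu) ω]
          exact h2' u hu
      have e1 : (φ ∘ fun a (i : (Finset.Ioc 0 t : Finset ℕ)) => Y i a) = f := by
        funext ω
        simp only [Function.comp_apply, hφ, hf_def]
        by_cases hω : ω ∈ A t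
        · rw [Set.indicator_of_mem ((hmem ω).2 hω), Set.indicator_of_mem hω,
            hg1Y t le_rfl ω]
        · rw [Set.indicator_of_notMem (fun hc => hω ((hmem ω).1 hc)),
            Set.indicator_of_notMem hω]
          simp
      have e2 : ((fun x : ↥(Finset.Ioc t n) → ℝ =>
          Real.exp (l * (∑ i : ↥(Finset.Ioc t n), x i)))
          ∘ fun a (i : ↥(Finset.Ioc t n)) => Y i a) = g := by
        funext ω
        simp only [Function.comp_apply, hg_def]
        congr 1
        rw [Finset.sum_coe_sort (Finset.Ioc t n) (fun j => Y j ω), ← hZ ω]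
      rwa [e1, e2] at h1
    have hfnn : 0 ≤ ∫ ω, f ω ∂μ := by
      apply integral_nonneg
      intro ω
      rw [hf_def]
      exact mul_nonneg (hindnn t ω) (Real.exp_pos _).le
    calc Real.exp (l * b) * (μ (A t)).toReal
        ≤ ∫ ω, f ω ∂μ := hstep1
    _ ≤ (∫ ω, f ω ∂μ) * ∫ ω, g ω ∂μ := le_mul_of_one_le_right hfnn hge1
    _ = ∫ ω, f ω * g ω ∂μ := (hind3.integral_mul_eq_mul_integral (hintF t t).aestronglyMeasurable hgint.aestronglyMeasurable).symm
    _ = ∫ ω, Set.indicator (A t) (fun _ => (1:ℝ)) ω * Real.exp (l * S n ω) ∂μ := by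
        congr 1
        funext ω
        rw [hf_def, hg_def]
        dsimp only
        rw [mul_assoc, ← Real.exp_add]
        ring_nf
  -- sum over t
  have hμBad : μ (⋃ t ∈ Finset.Icc 1 n, A t) = ∑ t ∈ Finset.Icc 1 n, μ (A t) :=
    measure_biUnion_finset hdisj (fun t _ => hAmeas t)
  have hrealBad : (μ (⋃ t ∈ Finset.Icc 1 n, A t)).toReal
      = ∑ t ∈ Finset.Icc 1 n, (μ (A t)).toReal := by
    rw [hμBad, ENNReal.toReal_sum (fun t _ => measure_ne_top μ _)]
  have hsumind : ∀ ω, ∑ t ∈ Finset.Icc 1 n, Set.indicator (A t) (fun _ => (1:ℝ)) ω ≤ 1 := by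
    intro ω
    by_cases h : ∃ t0 ∈ Finset.Icc 1 n, ω ∈ A t0
    · obtain ⟨t0, ht0m, ht0⟩ := h
      have heq : ∑ t ∈ Finset.Icc 1 n, Set.indicator (A t) (fun _ => (1:ℝ)) ω
          = Set.indicator (A t0) (fun _ => (1:ℝ)) ω := by
        refine Finset.sum_eq_single_of_mem t0 ht0m (fun t htm hne => ?_)
        have hd := hdisj htm ht0m hne
        have : ω ∉ A t := fun hc => (Set.disjoint_left.1 hd hc) ht0
        exact Set.indicator_of_notMem this _
      rw [heq, Set.indicator_of_mem ht0]
    · push_neg at h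
      rw [Finset.sum_eq_zero fun t htm => Set.indicator_of_notMem (h t htm) _]
      norm_num
  have hsum2 : ∑ t ∈ Finset.Icc 1 n,
      ∫ ω, Set.indicator (A t) (fun _ => (1:ℝ)) ω * Real.exp (l * S n ω) ∂μ
      ≤ ∫ ω, Real.exp (l * S n ω) ∂μ := by
    rw [← integral_finset_sum _ (fun t _ => hintF t n)]
    refine integral_mono (integrable_finset_sum _ (fun t _ => hintF t n)) (hintExpS n) ?_
    intro ω
    show ∑ t ∈ Finset.Icc 1 n, Set.indicator (A t) (fun _ => (1:ℝ)) ω * Real.exp (l * S n ω)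
      ≤ Real.exp (l * S n ω)
    rw [← Finset.sum_mul]
    have := hsumind ω
    nlinarith [Real.exp_pos (l * S n ω)]
  have hpow : ((1:ℝ) + σ2 * c) ^ n ≤ Real.exp (l * b) * Real.exp (-L) := by
    have h1 : ((1:ℝ) + σ2 * c) ^ n ≤ Real.exp (σ2 * c) ^ n := by
      apply pow_le_pow_left₀ h1c
      linarith [Real.add_one_le_exp (σ2 * c)]
    have h2 : Real.exp (σ2 * c) ^ n = Real.exp (n * (σ2 * c)) := by
      rw [← Real.exp_nat_mul]
    have h3 : Real.exp ((n:ℝ) * (σ2 * c)) ≤ Real.exp (l * b - L) := by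
      rw [Real.exp_le_exp]
      calc (n:ℝ) * (σ2 * c) = n * σ2 * c := by ring
      _ ≤ l * b - L := hkey
    rw [← Real.exp_add]
    calc ((1:ℝ) + σ2 * c) ^ n ≤ Real.exp (σ2 * c) ^ n := h1
    _ = Real.exp ((n:ℝ) * (σ2 * c)) := h2
    _ ≤ Real.exp (l * b - L) := h3
    _ = Real.exp (l * b + -L) := by ring_nf
  have hmain : Real.exp (l * b) * (μ (⋃ t ∈ Finset.Icc 1 n, A t)).toReal
      ≤ Real.exp (l * b) * Real.exp (-L) := by
    calc Real.exp (l * b) * (μ (⋃ t ∈ Finset.Icc 1 n, A t)).toReal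
        = ∑ t ∈ Finset.Icc 1 n, Real.exp (l * b) * (μ (A t)).toReal := by
          rw [hrealBad, Finset.mul_sum]
    _ ≤ ∑ t ∈ Finset.Icc 1 n,
        ∫ ω, Set.indicator (A t) (fun _ => (1:ℝ)) ω * Real.exp (l * S n ω) ∂μ :=
          Finset.sum_le_sum hperT
    _ ≤ ∫ ω, Real.exp (l * S n ω) ∂μ := hsum2
    _ ≤ (1 + σ2 * c) ^ n := hrec n
    _ ≤ Real.exp (l * b) * Real.exp (-L) := hpow
  have hBadle : (μ (⋃ t ∈ Finset.Icc 1 n, A t)).toReal ≤ Real.exp (-L) :=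
    le_of_mul_le_mul_left hmain (Real.exp_pos _)
  calc μ {ω | ∃ t ∈ Finset.Icc 1 n, b < ∑ i ∈ Finset.Icc 1 t, Y i ω}
      ≤ μ (⋃ t ∈ Finset.Icc 1 n, A t) := measure_mono hcover
  _ = ENNReal.ofReal ((μ (⋃ t ∈ Finset.Icc 1 n, A t)).toReal) :=
      (ENNReal.ofReal_toReal (measure_ne_top μ _)).symm
  _ ≤ ENNReal.ofReal (Real.exp (-L)) := ENNReal.ofReal_le_ofReal hBadle

set_option maxHeartbeats 1000000 in
theorem time_uniform_bennett_iid
    {Ω : Type*} [MeasurableSpace Ω] (μ : Measure Ω) [IsProbabilityMeasure μ]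
    (n : ℕ) (X : ℕ → Ω → ℝ) (σ2 : ℝ)
    (hmeas : ∀ i, Measurable (X i))
    (hindep : iIndepFun X μ)
    (hident : ∀ i, μ.map (X i) = μ.map (X 1))
    (hbdd : ∀ i, ∀ᵐ ω ∂μ, X i ω ∈ Set.Icc (0:ℝ) 1)
    (hvar : variance (X 1) μ = σ2)
    (δ : ℝ) (hδ : 0 < δ) (hδ1 : δ < 1) :
    1 - ENNReal.ofReal δ ≤
      μ {ω | ∀ t ∈ Finset.Icc 1 n,
        |∑ i ∈ Finset.Icc 1 t, (X i ω - ∫ x, X 1 x ∂μ)|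
          ≤ Real.sqrt (2 * n * σ2 * Real.log (2/δ)) + (1/3) * Real.log (2/δ)} := by
  classical
  set m := ∫ x, X 1 x ∂μ with hm_def
  set L := Real.log (2/δ) with hL_def
  set b := Real.sqrt (2 * (n:ℝ) * σ2 * L) + (1/3) * L with hb_def
  have hL : 0 < L := Real.log_pos (by rw [lt_div_iff₀ hδ]; linarith)
  have hb0 : 0 ≤ b := by
    rw [hb_def]
    have := Real.sqrt_nonneg (2 * (n:ℝ) * σ2 * L)
    nlinarith
  -- basic integrability and moments
  have hintX : ∀ i, Integrable (X i) μ := by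
    intro i
    refine (integrable_const (1:ℝ)).mono' (hmeas i).aestronglyMeasurable ?_
    filter_upwards [hbdd i] with ω h
    rw [Real.norm_eq_abs, abs_le]
    exact ⟨by linarith [h.1], h.2⟩
  have hint1 : ∀ i, ∫ ω, X i ω ∂μ = m := by
    intro i
    rw [hm_def]
    have hid : AEStronglyMeasurable (fun x : ℝ => x) (μ.map (X 1)) :=
      aestronglyMeasurable_id
    have hid' : AEStronglyMeasurable (fun x : ℝ => x) (μ.map (X i)) :=
      aestronglyMeasurable_id
    have h1 : ∫ ω, X i ω ∂μ = ∫ x, x ∂(μ.map (X i)) :=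
      (integral_map (hmeas i).aemeasurable hid').symm
    rw [h1, hident i, integral_map (hmeas 1).aemeasurable hid]
  have hm0 : 0 ≤ m := by
    rw [hm_def]
    apply integral_nonneg_of_ae
    filter_upwards [hbdd 1] with ω h using h.1
  have hm1 : m ≤ 1 := by
    rw [hm_def]
    calc ∫ ω, X 1 ω ∂μ ≤ ∫ _ω, (1:ℝ) ∂μ := by
          refine integral_mono_ae (hintX 1) (integrable_const 1) ?_
          filter_upwards [hbdd 1] with ω h using h.2
    _ = 1 := by simp
  have hmem2 : MemLp (X 1) 2 μ := by
    refine (memLp_top_of_bound (hmeas 1).aestronglyMeasurable 1 ?_).mono_exponent le_top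
    filter_upwards [hbdd 1] with ω h
    rw [Real.norm_eq_abs, abs_le]
    exact ⟨by linarith [h.1], h.2⟩
  have hsqX : ∀ i, ∫ ω, (X i ω - m) ^ 2 ∂μ = σ2 := by
    intro i
    have hmm : Measurable fun x : ℝ => (x - m) ^ 2 := (measurable_id.sub_const m).pow_const 2
    have h1 : ∫ ω, (X i ω - m) ^ 2 ∂μ = ∫ x, (x - m) ^ 2 ∂(μ.map (X i)) :=
      (integral_map (hmeas i).aemeasurable hmm.aestronglyMeasurable).symm
    rw [h1, hident i, integral_map (hmeas 1).aemeasurable hmm.aestronglyMeasurable]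
    rw [← hvar, variance_eq_integral (hmeas 1).aemeasurable]
  -- reduce to complement bound
  have hGmeas : MeasurableSet {ω | ∀ t ∈ Finset.Icc 1 n,
      |∑ i ∈ Finset.Icc 1 t, (X i ω - m)| ≤ b} := by
    have e : {ω | ∀ t ∈ Finset.Icc 1 n, |∑ i ∈ Finset.Icc 1 t, (X i ω - m)| ≤ b}
        = ⋂ t ∈ Finset.Icc 1 n, {ω | |∑ i ∈ Finset.Icc 1 t, (X i ω - m)| ≤ b} := by
      ext ω; simp
    rw [e]
    exact MeasurableSet.biInter (Finset.Icc 1 n).countable_toSet fun t _ =>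
      measurableSet_le (Finset.measurable_sum _ fun i _ => (hmeas i).sub_const m).abs
        measurable_const
  suffices hbad : μ {ω | ∀ t ∈ Finset.Icc 1 n,
      |∑ i ∈ Finset.Icc 1 t, (X i ω - m)| ≤ b}ᶜ ≤ ENNReal.ofReal δ by
    have h1 : μ {ω | ∀ t ∈ Finset.Icc 1 n, |∑ i ∈ Finset.Icc 1 t, (X i ω - m)| ≤ b}ᶜ
        = 1 - μ {ω | ∀ t ∈ Finset.Icc 1 n, |∑ i ∈ Finset.Icc 1 t, (X i ω - m)| ≤ b} := by
      rw [measure_compl hGmeas (measure_ne_top μ _), measure_univ]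
    calc 1 - ENNReal.ofReal δ
        ≤ 1 - μ {ω | ∀ t ∈ Finset.Icc 1 n, |∑ i ∈ Finset.Icc 1 t, (X i ω - m)| ≤ b}ᶜ :=
          tsub_le_tsub_left hbad 1
    _ = μ {ω | ∀ t ∈ Finset.Icc 1 n, |∑ i ∈ Finset.Icc 1 t, (X i ω - m)| ≤ b} := by
        rw [h1, ENNReal.sub_sub_cancel ENNReal.one_ne_top prob_le_one]
  have hσ0 : 0 ≤ σ2 := hvar ▸ variance_nonneg _ _
  rcases Nat.eq_zero_or_pos n with hn0 | hn
  · subst hn0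
    have e : {ω | ∀ t ∈ Finset.Icc 1 0, |∑ i ∈ Finset.Icc 1 t, (X i ω - m)| ≤ b} = Set.univ := by
      ext ω; simp
    rw [e, Set.compl_univ]
    simp
  rcases eq_or_lt_of_le hσ0 with hσz | hσpos
  · -- degenerate: σ2 = 0
    have hvar0 : variance (X 1) μ = 0 := by rw [hvar, ← hσz]
    have hXae : X 1 =ᵐ[μ] fun _ => m := by
      have he : evariance (X 1) μ = 0 := by
        rw [← hmem2.ofReal_variance_eq, hvar0]; simp
      exact (evariance_eq_zero_iff (hmeas 1).aemeasurable).1 he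
    have hXiae : ∀ i, ∀ᵐ ω ∂μ, X i ω = m := by
      intro i
      have hset : MeasurableSet ({m}ᶜ : Set ℝ) := (measurableSet_singleton m).compl
      have h0 : μ.map (X i) {m}ᶜ = 0 := by
        rw [hident i, Measure.map_apply (hmeas 1) hset]
        have h2 : μ {ω | ¬ X 1 ω = m} = 0 := ae_iff.1 hXae
        convert h2 using 2
        ext; simp
      have h2 : μ ((X i) ⁻¹' {m}ᶜ) = 0 := by
        rw [← Measure.map_apply (hmeas i) hset]; exact h0
      refine ae_iff.2 ?_
      convert h2 using 2
      ext; simp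
    have hall : ∀ᵐ ω ∂μ, ∀ i, X i ω = m := ae_all_iff.2 hXiae
    have hsub : {ω | ∀ i, X i ω = m}
        ⊆ {ω | ∀ t ∈ Finset.Icc 1 n, |∑ i ∈ Finset.Icc 1 t, (X i ω - m)| ≤ b} := by
      intro ω hω t _ht
      have hz : ∑ i ∈ Finset.Icc 1 t, (X i ω - m) = 0 :=
        Finset.sum_eq_zero fun i _ => by rw [hω i]; ring
      rw [hz, abs_zero]
      exact hb0
    have hGc : μ {ω | ∀ t ∈ Finset.Icc 1 n, |∑ i ∈ Finset.Icc 1 t, (X i ω - m)| ≤ b}ᶜ = 0 := by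
      refine measure_mono_null (Set.compl_subset_compl.2 hsub) ?_
      rw [Set.compl_setOf]
      exact ae_iff.1 hall
    rw [hGc]
    exact zero_le
  · -- main case
    set v := (n:ℝ) * σ2 with hv_def
    have hv : 0 < v := mul_pos (by exact_mod_cast hn) hσpos
    set s := Real.sqrt (2 * L / v) with hs_def
    have hs : 0 < s := Real.sqrt_pos.2 (by positivity)
    set l := s / (1 + s / 3) with hl_def
    have hd : 0 < 1 + s / 3 := by linarith
    have hl : 0 < l := div_pos hs hd
    have hl3 : l < 3 := by rw [hl_def, div_lt_iff₀ hd]; linarith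
    have hs2 : s ^ 2 = 2 * L / v := Real.sq_sqrt (by positivity)
    have hq : Real.sqrt (2 * (n:ℝ) * σ2 * L) * s = 2 * L := by
      rw [hs_def, ← Real.sqrt_mul (by positivity)]
      have e : 2 * (n:ℝ) * σ2 * L * (2 * L / v) = (2 * L) ^ 2 := by
        rw [hv_def]; field_simp
      rw [e, Real.sqrt_sq (by positivity)]
    have hkey : (n:ℝ) * σ2 * (Real.exp l - 1 - l) ≤ l * b - L := by
      have hc := exp_sub_le' hl.le hl3
      have hml3 : (0:ℝ) < 1 - l / 3 := by linarith
      have hident2 : v * (l ^ 2 / 2 * (1 - l / 3)⁻¹) = l * b - L := by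
        have hvs : v * s ^ 2 = 2 * L := by rw [hs2]; field_simp
        rw [hb_def, hl_def]
        generalize Real.sqrt (2 * (n:ℝ) * σ2 * L) = q at hq ⊢
        have h1 : 1 - (s / (1 + s / 3)) / 3 = 1 / (1 + s / 3) := by field_simp; ring
        rw [h1, div_pow]
        field_simp
        nlinarith [hq, hvs]
      calc (n:ℝ) * σ2 * (Real.exp l - 1 - l) = v * (Real.exp l - 1 - l) := by rw [hv_def]
      _ ≤ v * (l ^ 2 / 2 * (1 - l / 3)⁻¹) := by
          apply mul_le_mul_of_nonneg_left hc hv.le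
      _ = l * b - L := hident2
    -- apply oneSided twice
    have hYmeas : ∀ i, Measurable (fun ω => X i ω - m) := fun i => (hmeas i).sub_const m
    have hYindep : iIndepFun (fun i ω => X i ω - m) μ :=
      hindep.comp (fun _ x => x - m) (fun _ => measurable_id.sub_const m)
    have hYbdd : ∀ i, ∀ᵐ ω ∂μ, |X i ω - m| ≤ 1 := by
      intro i
      filter_upwards [hbdd i] with ω h
      rw [abs_le]
      constructor <;> [linarith [h.1]; linarith [h.2]]
    have hYmean : ∀ i, ∫ ω, (X i ω - m) ∂μ = 0 := by
      intro i
      rw [integral_sub (hintX i) (integrable_const m), hint1 i, integral_const]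
      simp
    have hP := oneSided μ n (fun i ω => X i ω - m) σ2 L b l hYmeas hYindep hYbdd hYmean
      (fun i => (hsqX i).le) hσpos.le hl hb0 hkey
    have hNmeas : ∀ i, Measurable (fun ω => m - X i ω) := fun i => (measurable_const.sub (hmeas i))
    have hNindep : iIndepFun (fun i ω => m - X i ω) μ :=
      hindep.comp (fun _ x => m - x) (fun _ => measurable_const.sub measurable_id)
    have hNbdd : ∀ i, ∀ᵐ ω ∂μ, |m - X i ω| ≤ 1 := by
      intro i
      filter_upwards [hbdd i] with ω h
      rw [abs_le]
      constructor <;> [linarith [h.2]; linarith [h.1]]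
    have hNmean : ∀ i, ∫ ω, (m - X i ω) ∂μ = 0 := by
      intro i
      rw [integral_sub (integrable_const m) (hintX i), hint1 i, integral_const]
      simp
    have hNsq : ∀ i, ∫ ω, (m - X i ω) ^ 2 ∂μ ≤ σ2 := by
      intro i
      have e : ∀ ω, (m - X i ω) ^ 2 = (X i ω - m) ^ 2 := fun ω => by ring
      calc ∫ ω, (m - X i ω) ^ 2 ∂μ = ∫ ω, (X i ω - m) ^ 2 ∂μ := by
            apply integral_congr_ae
            filter_upwards with ω using e ω
      _ ≤ σ2 := (hsqX i).le
    have hN := oneSided μ n (fun i ω => m - X i ω) σ2 L b l hNmeas hNindep hNbdd hNmean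
      hNsq hσpos.le hl hb0 hkey
    have hsub : {ω | ∀ t ∈ Finset.Icc 1 n, |∑ i ∈ Finset.Icc 1 t, (X i ω - m)| ≤ b}ᶜ
        ⊆ {ω | ∃ t ∈ Finset.Icc 1 n, b < ∑ i ∈ Finset.Icc 1 t, (X i ω - m)}
          ∪ {ω | ∃ t ∈ Finset.Icc 1 n, b < ∑ i ∈ Finset.Icc 1 t, (m - X i ω)} := by
      intro ω hω
      simp only [Set.mem_compl_iff, Set.mem_setOf_eq] at hω
      push_neg at hω
      obtain ⟨t, htm, hgt⟩ := hω
      rcases lt_abs.1 hgt with h | h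
      · exact Or.inl ⟨t, htm, h⟩
      · refine Or.inr ⟨t, htm, ?_⟩
        have e : ∑ i ∈ Finset.Icc 1 t, (m - X i ω) = -∑ i ∈ Finset.Icc 1 t, (X i ω - m) := by
          rw [← Finset.sum_neg_distrib]
          exact Finset.sum_congr rfl fun i _ => by ring
        rw [e]
        exact h
    have hexpL : Real.exp (-L) = δ / 2 := by
      rw [hL_def, Real.exp_neg, Real.exp_log (by positivity), inv_div]
    calc μ {ω | ∀ t ∈ Finset.Icc 1 n, |∑ i ∈ Finset.Icc 1 t, (X i ω - m)| ≤ b}ᶜ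
        ≤ μ ({ω | ∃ t ∈ Finset.Icc 1 n, b < ∑ i ∈ Finset.Icc 1 t, (X i ω - m)}
          ∪ {ω | ∃ t ∈ Finset.Icc 1 n, b < ∑ i ∈ Finset.Icc 1 t, (m - X i ω)}) :=
          measure_mono hsub
    _ ≤ μ {ω | ∃ t ∈ Finset.Icc 1 n, b < ∑ i ∈ Finset.Icc 1 t, (X i ω - m)}
        + μ {ω | ∃ t ∈ Finset.Icc 1 n, b < ∑ i ∈ Finset.Icc 1 t, (m - X i ω)} :=
          measure_union_le _ _
    _ ≤ ENNReal.ofReal (Real.exp (-L)) + ENNReal.ofReal (Real.exp (-L)) := add_le_add hP hN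
    _ = ENNReal.ofReal (δ / 2) + ENNReal.ofReal (δ / 2) := by rw [hexpL]
    _ = ENNReal.ofReal δ := by
        rw [← ENNReal.ofReal_add (by linarith) (by linarith)]
        norm_num
end
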